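/- Let G = (V,E) be a nontrivial graph with V = {v_1,…,v_n} and E = {e_1,…,e_m}, and let H be the graph constructed from G as follows: the vertex set of H is V_1 ∪ V_2 ∪ E_1 ∪ E_2 ∪ A ∪ B ∪ C ∪ F, where V_k = {v_i^k : i ∈ [n]} and E_k = {e_j^k : j ∈ [m]} for k ∈ [2], A = {a_i : i ∈ [n]}, B = {b_i : i ∈ [n]}, C = {c_i : i ∈ [n]}, F = {f_i : i ∈ [n]}; the edge set of H consists of the edges v_i^1 f_i, v_i^2 f_i, a_i b_i, b_i c_i, a_i f_i for each i ∈ [n], together with the edges v_p^k e_i^k and v_q^k e_i^k for each k ∈ [2] and each i ∈ [m] such that v_p and v_q are the endpoints of the edge e_i in G. Then, for every positive integer k, the graph G has a vertex cover of cardinality at most k if and only if H has a semipaired dominating set of cardinality at most 2n + 2k. -/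
import Mathlib


/-- `D` is a dominating set of `G`. -/
def IsDomSet {V : Type*} (G : SimpleGraph V) (D : Finset V) : Prop :=
  ∀ v, v ∉ D → ∃ u ∈ D, G.Adj u v

/-- `D` is a semipaired dominating set of `G`: a dominating set that can be partitioned
into 2-element subsets (given by a fixed-point-free involution on `D`) such that the two
vertices in each pair are at distance at most 2 (adjacent or having a common neighbor). -/
def IsSemiPD {V : Type*} (G : SimpleGraph V) (D : Finset V) : Prop :=
  IsDomSet G D ∧ ∃ f : V → V, ∀ v ∈ D, f v ∈ D ∧ f v ≠ v ∧ f (f v) = v ∧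
    (G.Adj v (f v) ∨ ∃ w, G.Adj v w ∧ G.Adj (f v) w)

/-- Vertices of the graph `H` constructed from a graph `G` with `n` vertices and `m`
enumerated edges. -/
inductive HV (n m : ℕ) where
  | v1 : Fin n → HV n m
  | v2 : Fin n → HV n m
  | e1 : Fin m → HV n m
  | e2 : Fin m → HV n m
  | a : Fin n → HV n m
  | b : Fin n → HV n m
  | c : Fin n → HV n m
  | f : Fin n → HV n m
deriving DecidableEq

/-- The defining relation of `H`, given the endpoint functions `p q : Fin m → Fin n`
of the enumerated edges of `G`: the edges are `v_i^1 f_i`, `v_i^2 f_i`, `a_i b_i`,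
`b_i c_i`, `a_i f_i` for each `i`, together with `v_{p j}^k e_j^k` and `v_{q j}^k e_j^k`
for `k = 1, 2` and each edge index `j`. -/
def hRel {n m : ℕ} (p q : Fin m → Fin n) : HV n m → HV n m → Prop
  | .v1 i, .f i' => i = i'
  | .v2 i, .f i' => i = i'
  | .a i, .b i' => i = i'
  | .b i, .c i' => i = i'
  | .a i, .f i' => i = i'
  | .e1 j, .v1 i => p j = i ∨ q j = i
  | .e2 j, .v2 i => p j = i ∨ q j = i
  | _, _ => False

/-- The graph `H` constructed from `G`. -/
def bigH {n m : ℕ} (p q : Fin m → Fin n) : SimpleGraph (HV n m) :=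
  SimpleGraph.fromRel (hRel p q)

set_option linter.unnecessarySeqFocus false

lemma bigH_adj {n m : ℕ} (p q : Fin m → Fin n) (x y : HV n m) :
    (bigH p q).Adj x y ↔ x ≠ y ∧ (hRel p q x y ∨ hRel p q y x) :=
  SimpleGraph.fromRel_adj _ _ _

section nbr
variable {n m : ℕ} {p q : Fin m → Fin n} {u : HV n m} {i : Fin n} {j : Fin m}

lemma adj_c (h : (bigH p q).Adj u (.c i)) : u = .b i := by
  rw [bigH_adj] at h; obtain ⟨hne, h | h⟩ := h <;> cases u <;> simp_all [hRel]
lemma adj_b (h : (bigH p q).Adj u (.b i)) : u = .a i ∨ u = .c i := by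
  rw [bigH_adj] at h; obtain ⟨hne, h | h⟩ := h <;> cases u <;> simp_all [hRel]
lemma adj_a (h : (bigH p q).Adj u (.a i)) : u = .b i ∨ u = .f i := by
  rw [bigH_adj] at h; obtain ⟨hne, h | h⟩ := h <;> cases u <;> simp_all [hRel]
lemma adj_e1 (h : (bigH p q).Adj u (.e1 j)) : u = .v1 (p j) ∨ u = .v1 (q j) := by
  rw [bigH_adj] at h
  obtain ⟨hne, h | h⟩ := h <;> cases u <;> simp_all [hRel] <;>
    rcases h with h | h <;> simp [h]
lemma adj_e2 (h : (bigH p q).Adj u (.e2 j)) : u = .v2 (p j) ∨ u = .v2 (q j) := by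
  rw [bigH_adj] at h
  obtain ⟨hne, h | h⟩ := h <;> cases u <;> simp_all [hRel] <;>
    rcases h with h | h <;> simp [h]

lemma adj_fv1 : (bigH p q).Adj (.f i) (.v1 i) := by simp [bigH_adj, hRel]
lemma adj_fv2 : (bigH p q).Adj (.f i) (.v2 i) := by simp [bigH_adj, hRel]
lemma adj_ba : (bigH p q).Adj (.b i) (.a i) := by simp [bigH_adj, hRel]
lemma adj_fa : (bigH p q).Adj (.f i) (.a i) := by simp [bigH_adj, hRel]
lemma adj_bc : (bigH p q).Adj (.b i) (.c i) := by simp [bigH_adj, hRel]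
lemma adj_e1v1q : (bigH p q).Adj (.e1 j) (.v1 (q j)) := by simp [bigH_adj, hRel]
lemma adj_e2v2q : (bigH p q).Adj (.e2 j) (.v2 (q j)) := by simp [bigH_adj, hRel]
lemma adj_e1v1p : (bigH p q).Adj (.e1 j) (.v1 (p j)) := by simp [bigH_adj, hRel]
lemma adj_e2v2p : (bigH p q).Adj (.e2 j) (.v2 (p j)) := by simp [bigH_adj, hRel]
end nbr

def prD {n m : ℕ} : HV n m → HV n m
  | .b i => .f i
  | .f i => .b i
  | .v1 i => .v2 i
  | .v2 i => .v1 i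
  | x => x

lemma forward {n m : ℕ} (G : SimpleGraph (Fin n)) (p q : Fin m → Fin n)
    (hpq : ∀ j : Fin m, G.Adj (p j) (q j))
    (k : ℕ) (C : Finset (Fin n)) (hcov : ∀ x y : Fin n, G.Adj x y → x ∈ C ∨ y ∈ C)
    (hck : C.card ≤ k) :
    ∃ D : Finset (HV n m), IsSemiPD (bigH p q) D ∧ D.card ≤ 2 * n + 2 * k := by
  classical
  set D : Finset (HV n m) :=
    ((Finset.univ.image (HV.b (m := m)) ∪ Finset.univ.image HV.f) ∪
      (C.image HV.v1 ∪ C.image HV.v2)) with hD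
  have hmem : ∀ x : HV n m, x ∈ D ↔
      (∃ i, x = .b i) ∨ (∃ i, x = .f i) ∨ (∃ i ∈ C, x = .v1 i) ∨ (∃ i ∈ C, x = .v2 i) := by
    intro x
    simp only [hD, Finset.mem_union, Finset.mem_image, Finset.mem_univ, true_and]
    constructor
    · rintro (((⟨i, hi⟩ | ⟨i, hi⟩) | (⟨i, hi, hx⟩ | ⟨i, hi, hx⟩))) <;>
        [exact Or.inl ⟨i, hi.symm⟩; exact Or.inr (Or.inl ⟨i, hi.symm⟩);
         exact Or.inr (Or.inr (Or.inl ⟨i, hi, hx.symm⟩));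
         exact Or.inr (Or.inr (Or.inr ⟨i, hi, hx.symm⟩))]
    · rintro (⟨i, hi⟩ | ⟨i, hi⟩ | ⟨i, hi, hx⟩ | ⟨i, hi, hx⟩) <;>
        [exact Or.inl (Or.inl ⟨i, hi.symm⟩); exact Or.inl (Or.inr ⟨i, hi.symm⟩);
         exact Or.inr (Or.inl ⟨i, hi, hx.symm⟩); exact Or.inr (Or.inr ⟨i, hi, hx.symm⟩)]
  refine ⟨D, ⟨?_, ?_⟩, ?_⟩
  · -- dominating
    intro v hv
    cases v with
    | v1 i => exact ⟨.f i, (hmem _).2 (Or.inr (Or.inl ⟨i, rfl⟩)), adj_fv1⟩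
    | v2 i => exact ⟨.f i, (hmem _).2 (Or.inr (Or.inl ⟨i, rfl⟩)), adj_fv2⟩
    | e1 j =>
      rcases hcov _ _ (hpq j) with h | h
      · exact ⟨.v1 (p j), (hmem _).2 (Or.inr (Or.inr (Or.inl ⟨_, h, rfl⟩))), adj_e1v1p.symm⟩
      · exact ⟨.v1 (q j), (hmem _).2 (Or.inr (Or.inr (Or.inl ⟨_, h, rfl⟩))), adj_e1v1q.symm⟩
    | e2 j =>
      rcases hcov _ _ (hpq j) with h | h
      · exact ⟨.v2 (p j), (hmem _).2 (Or.inr (Or.inr (Or.inr ⟨_, h, rfl⟩))), adj_e2v2p.symm⟩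
      · exact ⟨.v2 (q j), (hmem _).2 (Or.inr (Or.inr (Or.inr ⟨_, h, rfl⟩))), adj_e2v2q.symm⟩
    | a i => exact ⟨.b i, (hmem _).2 (Or.inl ⟨i, rfl⟩), adj_ba⟩
    | b i => exact absurd ((hmem _).2 (Or.inl ⟨i, rfl⟩)) hv
    | c i => exact ⟨.b i, (hmem _).2 (Or.inl ⟨i, rfl⟩), adj_bc⟩
    | f i => exact absurd ((hmem _).2 (Or.inr (Or.inl ⟨i, rfl⟩))) hv
  · -- pairing
    refine ⟨prD, fun v hv => ?_⟩
    rcases (hmem v).1 hv with ⟨i, rfl⟩ | ⟨i, rfl⟩ | ⟨i, hi, rfl⟩ | ⟨i, hi, rfl⟩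
    · exact ⟨(hmem _).2 (Or.inr (Or.inl ⟨i, rfl⟩)), by simp [prD], rfl,
        Or.inr ⟨.a i, adj_ba, adj_fa⟩⟩
    · exact ⟨(hmem _).2 (Or.inl ⟨i, rfl⟩), by simp [prD], rfl,
        Or.inr ⟨.a i, adj_fa, adj_ba⟩⟩
    · exact ⟨(hmem _).2 (Or.inr (Or.inr (Or.inr ⟨i, hi, rfl⟩))), by simp [prD], rfl,
        Or.inr ⟨.f i, adj_fv1.symm, adj_fv2.symm⟩⟩
    · exact ⟨(hmem _).2 (Or.inr (Or.inr (Or.inl ⟨i, hi, rfl⟩))), by simp [prD], rfl,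
        Or.inr ⟨.f i, adj_fv2.symm, adj_fv1.symm⟩⟩
  · -- cardinality
    have h1 : D.card ≤ (n + n) + (C.card + C.card) := by
      calc D.card ≤ _ + _ := Finset.card_union_le _ _
        _ ≤ ((Finset.univ.image (HV.b (m := m))).card + (Finset.univ.image HV.f).card) +
            ((C.image HV.v1).card + (C.image HV.v2).card) :=
          add_le_add (Finset.card_union_le _ _) (Finset.card_union_le _ _)
        _ ≤ (n + n) + (C.card + C.card) := by
          refine add_le_add (add_le_add ?_ ?_) (add_le_add ?_ ?_) <;>
            exact Finset.card_image_le.trans (by simp)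
    omega

def isZ {n m : ℕ} : HV n m → Bool
  | .a _ | .b _ | .c _ | .f _ => true
  | _ => false

def isX1 {n m : ℕ} : HV n m → Bool
  | .v1 _ | .e1 _ => true
  | _ => false

def isX2 {n m : ℕ} : HV n m → Bool
  | .v2 _ | .e2 _ => true
  | _ => false

def φ1 {n m : ℕ} (p : Fin m → Fin n) : HV n m → Fin n
  | .v1 i => i | .v2 i => i | .a i => i | .b i => i | .c i => i | .f i => i
  | .e1 j => p j | .e2 j => p j

lemma backward {n m : ℕ} (G : SimpleGraph (Fin n)) (p q : Fin m → Fin n)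
    (hsurj : ∀ x y : Fin n, G.Adj x y →
      ∃ j : Fin m, (p j = x ∧ q j = y) ∨ (p j = y ∧ q j = x))
    (k : ℕ) (D : Finset (HV n m)) (hspd : IsSemiPD (bigH p q) D)
    (hcard : D.card ≤ 2 * n + 2 * k) :
    ∃ C : Finset (Fin n), (∀ x y : Fin n, G.Adj x y → x ∈ C ∨ y ∈ C) ∧ C.card ≤ k := by
  classical
  obtain ⟨hdom, pr, hpr⟩ := hspd
  have hgad : ∀ i : Fin n,
      2 ≤ (D ∩ ({.a i, .b i, .c i, .f i} : Finset (HV n m))).card := by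
    intro i
    have hw : ∃ w ∈ D, w = HV.c i ∨ w = HV.b i := by
      by_cases hc : (HV.c i : HV n m) ∈ D
      · exact ⟨_, hc, Or.inl rfl⟩
      · obtain ⟨u, hu, hadj⟩ := hdom _ hc
        exact ⟨u, hu, Or.inr (adj_c hadj)⟩
    obtain ⟨w, hwD, hw⟩ := hw
    obtain ⟨h1, h2, _h3, h4⟩ := hpr w hwD
    have hwg : w ∈ ({.a i, .b i, .c i, .f i} : Finset (HV n m)) := by
      rcases hw with rfl | rfl <;> simp
    have hprg : pr w ∈ ({.a i, .b i, .c i, .f i} : Finset (HV n m)) := by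
      rcases hw with rfl | rfl
      · rcases h4 with h | ⟨x, hx1, hx2⟩
        · simp [adj_c h.symm]
        · have hx : x = HV.b i := adj_c hx1.symm
          subst hx
          rcases adj_b hx2 with h' | h' <;> simp [h']
      · rcases h4 with h | ⟨x, hx1, hx2⟩
        · rcases adj_b h.symm with h' | h' <;> simp [h']
        · rcases adj_b hx1.symm with rfl | rfl
          · rcases adj_a hx2 with h' | h' <;> simp [h']
          · simp [adj_c hx2]
    have hlt : 1 < (D ∩ ({.a i, .b i, .c i, .f i} : Finset (HV n m))).card :=
      Finset.one_lt_card.mpr ⟨pr w, Finset.mem_inter.2 ⟨h1, hprg⟩,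
        w, Finset.mem_inter.2 ⟨hwD, hwg⟩, h2⟩
    omega
  set Z := D.filter (fun x => isZ x) with hZ
  set X := D.filter (fun x => isX1 x) with hX
  set Y := D.filter (fun x => isX2 x) with hY
  have hsplit : Z.card + (X.card + Y.card) = D.card := by
    have e1 : Z.card + (D.filter (fun x => ¬ isZ x)).card = D.card :=
      Finset.card_filter_add_card_filter_not _
    have e2 : ((D.filter (fun x => ¬ isZ x)).filter (fun x => isX1 x)).card +
        ((D.filter (fun x => ¬ isZ x)).filter (fun x => ¬ isX1 x)).card =
        (D.filter (fun x => ¬ isZ x)).card :=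
      Finset.card_filter_add_card_filter_not _
    have e3 : (D.filter (fun x => ¬ isZ x)).filter (fun x => isX1 x) = X := by
      rw [Finset.filter_filter, hX]
      refine Finset.filter_congr fun x _ => ?_
      cases x <;> simp [isZ, isX1]
    have e4 : (D.filter (fun x => ¬ isZ x)).filter (fun x => ¬ isX1 x) = Y := by
      rw [Finset.filter_filter, hY]
      refine Finset.filter_congr fun x _ => ?_
      cases x <;> simp [isZ, isX1, isX2]
    rw [e3, e4] at e2
    omega
  have hZcard : 2 * n ≤ Z.card := by
    have hdisj : ∀ i ∈ (Finset.univ : Finset (Fin n)), ∀ j ∈ Finset.univ, i ≠ j →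
        Disjoint (D ∩ ({.a i, .b i, .c i, .f i} : Finset (HV n m)))
          (D ∩ ({.a j, .b j, .c j, .f j} : Finset (HV n m))) := by
      intro i _ j _ hij
      rw [Finset.disjoint_left]
      intro x hxi hxj
      simp only [Finset.mem_inter, Finset.mem_insert, Finset.mem_singleton] at hxi hxj
      apply hij
      rcases hxi.2 with rfl | rfl | rfl | rfl <;>
        rcases hxj.2 with h | h | h | h <;> simp_all
    have hsub : (Finset.univ.biUnion
        (fun i => D ∩ ({.a i, .b i, .c i, .f i} : Finset (HV n m)))) ⊆ Z := by
      intro x hx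
      simp only [Finset.mem_biUnion, Finset.mem_inter, Finset.mem_insert,
        Finset.mem_singleton] at hx
      obtain ⟨i, _, hxD, hxg⟩ := hx
      refine Finset.mem_filter.2 ⟨hxD, ?_⟩
      rcases hxg with rfl | rfl | rfl | rfl <;> simp [isZ]
    calc 2 * n = ∑ _i : Fin n, 2 := by simp [mul_comm]
      _ ≤ ∑ i : Fin n, (D ∩ ({.a i, .b i, .c i, .f i} : Finset (HV n m))).card :=
        Finset.sum_le_sum fun i _ => hgad i
      _ = (Finset.univ.biUnion
          (fun i => D ∩ ({.a i, .b i, .c i, .f i} : Finset (HV n m)))).card :=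
        (Finset.card_biUnion hdisj).symm
      _ ≤ Z.card := Finset.card_le_card hsub
  have hXY : X.card ≤ k ∨ Y.card ≤ k := by omega
  rcases hXY with hXk | hYk
  · refine ⟨X.image (φ1 p), ?_, Finset.card_image_le.trans hXk⟩
    intro x y hadj
    obtain ⟨j, hj⟩ := hsurj x y hadj
    by_cases hj1 : (HV.e1 j : HV n m) ∈ D
    · have hmx : HV.e1 j ∈ X := Finset.mem_filter.2 ⟨hj1, by simp [isX1]⟩
      have hp : p j ∈ X.image (φ1 p) := Finset.mem_image.2 ⟨_, hmx, rfl⟩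
      rcases hj with ⟨h1, _⟩ | ⟨h1, _⟩
      · exact Or.inl (h1 ▸ hp)
      · exact Or.inr (h1 ▸ hp)
    · obtain ⟨u, huD, hadju⟩ := hdom _ hj1
      rcases adj_e1 hadju with rfl | rfl
      · have hmx : HV.v1 (p j) ∈ X := Finset.mem_filter.2 ⟨huD, by simp [isX1]⟩
        have hp : p j ∈ X.image (φ1 p) := Finset.mem_image.2 ⟨_, hmx, rfl⟩
        rcases hj with ⟨h1, _⟩ | ⟨h1, _⟩
        · exact Or.inl (h1 ▸ hp)
        · exact Or.inr (h1 ▸ hp)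
      · have hmx : HV.v1 (q j) ∈ X := Finset.mem_filter.2 ⟨huD, by simp [isX1]⟩
        have hp : q j ∈ X.image (φ1 p) := Finset.mem_image.2 ⟨_, hmx, rfl⟩
        rcases hj with ⟨_, h2⟩ | ⟨_, h2⟩
        · exact Or.inr (h2 ▸ hp)
        · exact Or.inl (h2 ▸ hp)
  · refine ⟨Y.image (φ1 p), ?_, Finset.card_image_le.trans hYk⟩
    intro x y hadj
    obtain ⟨j, hj⟩ := hsurj x y hadj
    by_cases hj1 : (HV.e2 j : HV n m) ∈ D
    · have hmx : HV.e2 j ∈ Y := Finset.mem_filter.2 ⟨hj1, by simp [isX2]⟩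
      have hp : p j ∈ Y.image (φ1 p) := Finset.mem_image.2 ⟨_, hmx, rfl⟩
      rcases hj with ⟨h1, _⟩ | ⟨h1, _⟩
      · exact Or.inl (h1 ▸ hp)
      · exact Or.inr (h1 ▸ hp)
    · obtain ⟨u, huD, hadju⟩ := hdom _ hj1
      rcases adj_e2 hadju with rfl | rfl
      · have hmx : HV.v2 (p j) ∈ Y := Finset.mem_filter.2 ⟨huD, by simp [isX2]⟩
        have hp : p j ∈ Y.image (φ1 p) := Finset.mem_image.2 ⟨_, hmx, rfl⟩
        rcases hj with ⟨h1, _⟩ | ⟨h1, _⟩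
        · exact Or.inl (h1 ▸ hp)
        · exact Or.inr (h1 ▸ hp)
      · have hmx : HV.v2 (q j) ∈ Y := Finset.mem_filter.2 ⟨huD, by simp [isX2]⟩
        have hp : q j ∈ Y.image (φ1 p) := Finset.mem_image.2 ⟨_, hmx, rfl⟩
        rcases hj with ⟨_, h2⟩ | ⟨_, h2⟩
        · exact Or.inr (h2 ▸ hp)
        · exact Or.inl (h2 ▸ hp)

/-- Let `H` be the graph constructed from a nontrivial graph `G = (V, E)` with
`V = {v_1,…,v_n}` and `E = {e_1,…,e_m}` (enumerated by endpoint functions `p, q`).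
For every positive integer `k`, `G` has a vertex cover of cardinality at most `k`
iff `H` has a semipaired dominating set of cardinality at most `2n + 2k`. -/
theorem vertexCover_iff_semiPD_bigH {n m : ℕ} (hn : 2 ≤ n)
    (G : SimpleGraph (Fin n)) (p q : Fin m → Fin n)
    (hpq : ∀ j : Fin m, G.Adj (p j) (q j))
    (hsurj : ∀ x y : Fin n, G.Adj x y →
      ∃ j : Fin m, (p j = x ∧ q j = y) ∨ (p j = y ∧ q j = x))
    (hinj : Function.Injective fun j : Fin m => s(p j, q j))
    (k : ℕ) (hk : 0 < k) :
    (∃ C : Finset (Fin n), (∀ x y : Fin n, G.Adj x y → x ∈ C ∨ y ∈ C) ∧ C.card ≤ k) ↔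
    (∃ D : Finset (HV n m), IsSemiPD (bigH p q) D ∧ D.card ≤ 2 * n + 2 * k) := by
  constructor
  · rintro ⟨C, hcov, hck⟩
    exact forward G p q hpq k C hcov hck
  · rintro ⟨D, hspd, hcard⟩
    exact backward G p q hsurj k D hspd hcard
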